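/- arXiv:2505.20891 — 2 statements merged into one kernel-verified Lean document; each statement's English description precedes it below -/
import Mathlib

section
/- The function f(x) = x·log₂(1 + a/(bx + c)) is concave on (0, ∞) for all positive constants a, b, c. -/
open Real Set

lemma aux_concave (b A c : ℝ) (hb : 0 < b) (hA : 0 < A) (hc : 0 < c) (hcA : c < A) :
    ConcaveOn ℝ (Set.Ioi (0:ℝ))
      (fun x : ℝ => x * Real.log (b*x+A) - x * Real.log (b*x+c)) := by
  have hpos : ∀ (d : ℝ), 0 < d → ∀ x ∈ interior (Ioi (0:ℝ)), 0 < b*x+d := by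
    intro d hd x hx
    rw [interior_Ioi] at hx
    have : 0 < x := hx
    positivity
  apply concaveOn_of_hasDerivWithinAt2_nonpos (f' := fun x =>
      (Real.log (b*x+A) + x * (b/(b*x+A))) - (Real.log (b*x+c) + x * (b/(b*x+c))))
    (f'' := fun x =>
      (b/(b*x+A) + (b/(b*x+A) + x * ((0*(b*x+A) - b*b)/(b*x+A)^2)))
      - (b/(b*x+c) + (b/(b*x+c) + x * ((0*(b*x+c) - b*b)/(b*x+c)^2))))
    (convex_Ioi 0)
  · have hcont : ∀ d : ℝ, 0 < d → ContinuousOn (fun x : ℝ => x * Real.log (b*x+d)) (Ioi 0) := by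
      intro d hd
      apply continuous_id.continuousOn.mul
      apply ContinuousOn.log (by fun_prop)
      intro y hy
      have hy0 : (0:ℝ) < y := hy
      positivity
    exact (hcont A hA).sub (hcont c hc)
  · intro x hx
    have hu : b*x+A ≠ 0 := ne_of_gt (hpos A hA x hx)
    have hv : b*x+c ≠ 0 := ne_of_gt (hpos c hc x hx)
    have h1 : HasDerivAt (fun x : ℝ => b*x+A) b x := by
      simpa using ((hasDerivAt_id' x).const_mul b).add_const A
    have h2 : HasDerivAt (fun x : ℝ => b*x+c) b x := by
      simpa using ((hasDerivAt_id' x).const_mul b).add_const c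
    have hlu : HasDerivAt (fun x : ℝ => Real.log (b*x+A)) (b/(b*x+A)) x := h1.log hu
    have hlv : HasDerivAt (fun x : ℝ => Real.log (b*x+c)) (b/(b*x+c)) x := h2.log hv
    have := (((hasDerivAt_id' x).mul hlu).sub ((hasDerivAt_id' x).mul hlv)).hasDerivWithinAt
      (s := interior (Ioi (0:ℝ)))
    exact this.congr_deriv (by ring)
  · intro x hx
    have hu : b*x+A ≠ 0 := ne_of_gt (hpos A hA x hx)
    have hv : b*x+c ≠ 0 := ne_of_gt (hpos c hc x hx)
    have h1 : HasDerivAt (fun x : ℝ => b*x+A) b x := by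
      simpa using ((hasDerivAt_id' x).const_mul b).add_const A
    have h2 : HasDerivAt (fun x : ℝ => b*x+c) b x := by
      simpa using ((hasDerivAt_id' x).const_mul b).add_const c
    have hlu : HasDerivAt (fun x : ℝ => Real.log (b*x+A)) (b/(b*x+A)) x := h1.log hu
    have hlv : HasDerivAt (fun x : ℝ => Real.log (b*x+c)) (b/(b*x+c)) x := h2.log hv
    have hqu : HasDerivAt (fun x : ℝ => b/(b*x+A)) ((0*(b*x+A) - b*b)/(b*x+A)^2) x :=
      (hasDerivAt_const x b).div h1 hu
    have hqv : HasDerivAt (fun x : ℝ => b/(b*x+c)) ((0*(b*x+c) - b*b)/(b*x+c)^2) x :=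
      (hasDerivAt_const x b).div h2 hv
    exact ((hlu.add ((hasDerivAt_id' x).mul hqu |>.congr_deriv (by ring))).sub
      (hlv.add ((hasDerivAt_id' x).mul hqv |>.congr_deriv (by ring)))).hasDerivWithinAt
  · intro x hx
    rw [interior_Ioi] at hx
    have hx0 : (0:ℝ) < x := hx
    have hu : (0:ℝ) < b*x+A := by positivity
    have hv : (0:ℝ) < b*x+c := by positivity
    have heq : (b/(b*x+A) + (b/(b*x+A) + x * ((0*(b*x+A) - b*b)/(b*x+A)^2)))
      - (b/(b*x+c) + (b/(b*x+c) + x * ((0*(b*x+c) - b*b)/(b*x+c)^2)))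
      = (b*(A-c)*(-(b*x*(A+c)) - 2*A*c))/((b*x+A)^2*(b*x+c)^2) := by
      field_simp
      ring
    rw [heq]
    apply div_nonpos_of_nonpos_of_nonneg
    · apply mul_nonpos_of_nonneg_of_nonpos
      · nlinarith
      · nlinarith
    · positivity

/-- The function `f(x) = x·log₂(1 + a/(bx + c))` is concave on `(0, ∞)`
for all positive constants `a, b, c`. -/
theorem rate_concave_on_bandwidth (a b c : ℝ) (ha : 0 < a) (hb : 0 < b) (hc : 0 < c) :
    ConcaveOn ℝ (Set.Ioi (0 : ℝ))
      (fun x : ℝ => x * Real.logb 2 (1 + a / (b * x + c))) := by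
  have haux := aux_concave b (a + c) c hb (by linarith) hc (by linarith)
  have hsmul : ConcaveOn ℝ (Set.Ioi (0:ℝ))
      ((Real.log 2)⁻¹ • fun x : ℝ => x * Real.log (b*x+(a+c)) - x * Real.log (b*x+c)) :=
    haux.smul (by positivity)
  have heq : ∀ z ∈ Set.Ioi (0:ℝ), z * Real.logb 2 (1 + a / (b * z + c))
      = (Real.log 2)⁻¹ * (z * Real.log (b*z+(a+c)) - z * Real.log (b*z+c)) := by
    intro z hz
    have hz0 : (0:ℝ) < z := hz
    have hv : (0:ℝ) < b*z+c := by positivity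
    have hu : (0:ℝ) < b*z+(a+c) := by positivity
    have h1 : 1 + a / (b * z + c) = (b*z+(a+c)) / (b*z+c) := by
      field_simp; ring
    rw [h1, Real.logb, Real.log_div (ne_of_gt hu) (ne_of_gt hv)]
    field_simp
  refine ⟨convex_Ioi 0, fun x hx y hy p q hp hq hpq => ?_⟩
  have hmem := (convex_Ioi (0:ℝ)) hx hy hp hq hpq
  have := hsmul.2 hx hy hp hq hpq
  simp only [Pi.smul_apply, smul_eq_mul] at this
  simp only [smul_eq_mul] at hmem ⊢
  rw [heq x hx, heq y hy, heq _ hmem]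
  simpa using this
end

section
/- The function x ↦ x·log₂(1 + a/(bx + c)) is strictly increasing on (0, ∞) for a, b, c > 0; i.e., its first derivative log₂(1 + a/(bx+c)) − (abx)/(ln2·(bx+c)·(bx+c+a)) is strictly positive for all x > 0. -/
/-- The rate function `x ↦ x·log₂(1 + a/(bx + c))` is strictly increasing on
`(0, ∞)` for `a, b, c > 0`; equivalently, its first derivative
`log₂(1 + a/(bx+c)) − abx/(ln2·(bx+c)·(bx+c+a))` is strictly positive for all
`x > 0`. -/
theorem rate_strictly_increasing (a b c : ℝ) (ha : 0 < a) (hb : 0 < b)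
    (hc : 0 < c) :
    (∀ x : ℝ, 0 < x →
      0 < Real.logb 2 (1 + a / (b * x + c)) -
        a * b * x / (Real.log 2 * (b * x + c) * (b * x + c + a))) ∧
    StrictMonoOn (fun x : ℝ => x * Real.logb 2 (1 + a / (b * x + c)))
      (Set.Ioi 0) := by
  have hl2 : (0:ℝ) < Real.log 2 := Real.log_pos (by norm_num)
  have key : ∀ x : ℝ, 0 < x →
      0 < Real.logb 2 (1 + a / (b * x + c)) -
        a * b * x / (Real.log 2 * (b * x + c) * (b * x + c + a)) := by
    intro x hx
    have hd : 0 < b * x + c := by positivity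
    have hda : 0 < b * x + c + a := by positivity
    have ht : 0 < a / (b * x + c) := by positivity
    have hu : 0 < 1 + a / (b * x + c) := by linarith
    have hlog : (a / (b * x + c)) / (1 + a / (b * x + c)) <
        Real.log (1 + a / (b * x + c)) := by
      have h1 : Real.log (1 + a / (b * x + c))⁻¹ <
          (1 + a / (b * x + c))⁻¹ - 1 :=
        Real.log_lt_sub_one_of_pos (by positivity)
          (fun h => by rw [inv_eq_one] at h; nlinarith [ht])
      rw [Real.log_inv] at h1
      have h3 : (a / (b * x + c)) / (1 + a / (b * x + c)) =
          1 - (1 + a / (b * x + c))⁻¹ := by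
        field_simp
        ring
      rw [h3]; linarith
    have hsimp : (a / (b * x + c)) / (1 + a / (b * x + c)) =
        a / (b * x + c + a) := by
      rw [div_div]
      congr 1
      field_simp
    rw [hsimp] at hlog
    have h4 : a * b * x / ((b * x + c) * (b * x + c + a)) <
        a / (b * x + c + a) := by
      rw [div_lt_div_iff₀ (by positivity) hda]
      nlinarith [mul_pos (mul_pos ha hc) hda]
    have h5 : a * b * x / (Real.log 2 * (b * x + c) * (b * x + c + a)) =
        (a * b * x / ((b * x + c) * (b * x + c + a))) / Real.log 2 := by
      field_simp
    rw [Real.logb, sub_pos, h5]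
    exact div_lt_div_of_pos_right (lt_trans h4 hlog) hl2 |>.trans_le le_rfl
  refine ⟨key, ?_⟩
  have hderiv : ∀ x ∈ Set.Ioi (0:ℝ),
      HasDerivAt (fun x : ℝ => x * Real.logb 2 (1 + a / (b * x + c)))
        (Real.logb 2 (1 + a / (b * x + c)) -
          a * b * x / (Real.log 2 * (b * x + c) * (b * x + c + a))) x := by
    intro x hx
    simp only [Set.mem_Ioi] at hx
    have hd : 0 < b * x + c := by positivity
    have ht : 0 < a / (b * x + c) := by positivity
    have hu : 0 < 1 + a / (b * x + c) := by linarith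
    have h1 : HasDerivAt (fun x : ℝ => b * x + c) b x := by
      simpa using ((hasDerivAt_id x).const_mul b).add_const c
    have h2 : HasDerivAt (fun x : ℝ => 1 + a / (b * x + c))
        ((0 * (b * x + c) - a * b) / (b * x + c) ^ 2) x :=
      ((hasDerivAt_const x a).div h1 (ne_of_gt hd)).const_add 1
    have h3 : HasDerivAt (fun x : ℝ => Real.log (1 + a / (b * x + c)))
        (((0 * (b * x + c) - a * b) / (b * x + c) ^ 2) / (1 + a / (b * x + c)))
        x := h2.log (ne_of_gt hu)
    have h4 := (hasDerivAt_id x).mul (h3.div_const (Real.log 2))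
    have heq : (fun x : ℝ => x * Real.logb 2 (1 + a / (b * x + c))) =
        fun x : ℝ => x * (Real.log (1 + a / (b * x + c)) / Real.log 2) := by
      funext y; rw [Real.logb]
    rw [heq]
    refine h4.congr_deriv ?_
    rw [Real.logb, id]
    field_simp
    ring
  apply StrictMonoOn.mono (s := Set.Ioi 0) ?_ le_rfl
  exact strictMonoOn_of_deriv_pos (convex_Ioi 0)
    (fun x hx => ((hderiv x hx).continuousAt).continuousWithinAt)
    (fun x hx => by
      rw [interior_Ioi] at hx
      rw [(hderiv x hx).deriv]
      exact key x hx)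
end
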